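/- Let g ∈ H↑ (a nondecreasing ℕ-valued weight function) and let f be an unbounded modulus function. Let C ⊆ ℕ be an infinite set with increasing enumeration C = {c_0 < c_1 < c_2 < ⋯}. Then C ∈ Z_g(f) if and only if lim_{m→∞} f(|C ∩ [0, c_m - 1]|)/f(g(c_m)) = 0. -/

import Mathlib

open Filter Topology

/-- `cnt C k` is the number of elements of `C` in `[0, k-1]`. -/
noncomputable def cnt (C : Set ℕ) (k : ℕ) : ℕ := (C ∩ Set.Iio k).ncard

/-- A modulus function `f : [0,∞) → [0,∞)`: nonnegative, increasing, subadditive,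
vanishing exactly at `0`, and right continuous at `0`. -/
def IsModulus (f : ℝ → ℝ) : Prop :=
  (∀ x, 0 ≤ x → 0 ≤ f x) ∧ MonotoneOn f (Set.Ici 0) ∧
  (∀ x y, 0 ≤ x → 0 ≤ y → f (x + y) ≤ f x + f y) ∧
  (∀ x, 0 ≤ x → (f x = 0 ↔ x = 0)) ∧ ContinuousWithinAt f (Set.Ici 0) 0

/-- `f` is unbounded on `[0,∞)`. -/
def IsUnboundedMod (f : ℝ → ℝ) : Prop := ∀ M : ℝ, ∃ x : ℝ, 0 ≤ x ∧ M < f x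

/-- `H↑`: nondecreasing `ℕ`-valued weight functions, i.e. monotone `g : ℕ → ℕ`
with `g(k) → ∞` and `k / g(k)` not converging to `0`. -/
def InHup (g : ℕ → ℕ) : Prop :=
  Monotone g ∧ Tendsto g atTop atTop ∧
  ¬ Tendsto (fun k : ℕ => (k : ℝ) / (g k : ℝ)) atTop (nhds 0)

/-- The modular simple density ideal `Z_g(f)` for a `ℕ`-valued weight function. -/
def ZgfN (f : ℝ → ℝ) (g : ℕ → ℕ) : Set (Set ℕ) :=
  {C | Tendsto (fun k => f (cnt C k) / f (g k : ℝ)) atTop (nhds 0)}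

theorem stmt4 (f : ℝ → ℝ) (g : ℕ → ℕ) (hf : IsModulus f) (hfu : IsUnboundedMod f)
    (hg : InHup g) (C : Set ℕ) (c : ℕ → ℕ) (hc : StrictMono c) (hC : Set.range c = C) :
    C ∈ ZgfN f g ↔
      Tendsto (fun m => f (cnt C (c m)) / f (g (c m) : ℝ)) atTop (nhds 0) := by
  obtain ⟨hf0, hfmono, hfsub, hfzero, -⟩ := hf
  obtain ⟨hgmono, hgtop, -⟩ := hg
  have hfpos : ∀ t : ℝ, 0 < t → 0 < f t := by
    intro t ht
    rcases lt_or_eq_of_le (hf0 t ht.le) with h | h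
    · exact h
    · exact absurd ((hfzero t ht.le).mp h.symm) ht.ne'
  constructor
  · intro h
    exact h.comp hc.tendsto_atTop
  · intro h
    subst hC
    have hex : ∀ k : ℕ, ∃ n, k ≤ c n := fun k => ⟨k, hc.le_apply⟩
    set M : ℕ → ℕ := fun k => Nat.find (hex k) with hM
    have hMlt : ∀ k n, c n < k ↔ n < M k := by
      intro k n
      constructor
      · intro hn
        by_contra hle
        push_neg at hle
        exact absurd ((Nat.find_spec (hex k)).trans (hc.monotone hle)) (not_le.mpr hn)
      · intro hn
        exact lt_of_not_ge (Nat.find_min (hex k) hn)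
    have hcnt : ∀ k, cnt (Set.range c) k = M k := by
      intro k
      have himg : Set.range c ∩ Set.Iio k = c '' Set.Iio (M k) := by
        ext x
        simp only [Set.mem_inter_iff, Set.mem_range, Set.mem_Iio, Set.mem_image]
        constructor
        · rintro ⟨⟨n, rfl⟩, hx⟩
          exact ⟨n, (hMlt k n).mp hx, rfl⟩
        · rintro ⟨n, hn, rfl⟩
          exact ⟨⟨n, rfl⟩, (hMlt k n).mpr hn⟩
      rw [cnt, himg, Set.ncard_image_of_injective _ hc.injective, ← Finset.coe_range,
        Set.ncard_coe_finset, Finset.card_range]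
    have hMc : ∀ j, M (c j) = j := by
      intro j
      have h1 : M (c j) ≤ j := Nat.find_le le_rfl
      have h2 : ¬ c (M (c j)) < c j := not_lt.mpr (Nat.find_spec (hex (c j)))
      rcases lt_or_ge (M (c j)) j with hlt | hge
      · exact absurd (hc hlt) h2
      · exact le_antisymm h1 hge
    have hMtop : Tendsto M atTop atTop := by
      rw [tendsto_atTop]
      intro N
      filter_upwards [eventually_ge_atTop (c N + 1)] with k hk
      exact le_of_lt ((hMlt k N).mp hk)
    have h' : Tendsto (fun m : ℕ => f (m : ℝ) / f (g (c m) : ℝ)) atTop (nhds 0) := by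
      simpa only [hcnt, hMc] using h
    have hfgc : Tendsto (fun m : ℕ => f (g (c m) : ℝ)) atTop atTop := by
      rw [tendsto_atTop]
      intro A
      obtain ⟨x, hx0, hxA⟩ := hfu A
      have hgr : Tendsto (fun m : ℕ => ((g (c m) : ℝ))) atTop atTop :=
        tendsto_natCast_atTop_atTop.comp (hgtop.comp hc.tendsto_atTop)
      filter_upwards [hgr.eventually_ge_atTop x] with m hm
      exact hxA.le.trans (hfmono (Set.mem_Ici.mpr hx0) (Set.mem_Ici.mpr (hx0.trans hm)) hm)
    have hφtop : Tendsto (fun k => M k - 1) atTop atTop := by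
      rw [tendsto_atTop]
      intro N
      filter_upwards [hMtop.eventually_ge_atTop (N + 1)] with k hk
      omega
    have hbase : Tendsto (fun m : ℕ => (f (m : ℝ) + f 1) / f (g (c m) : ℝ)) atTop (nhds 0) := by
      have hc1 : Tendsto (fun m : ℕ => f 1 / f (g (c m) : ℝ)) atTop (nhds 0) :=
        Tendsto.div_atTop (tendsto_const_nhds : Tendsto (fun _ : ℕ => f 1) atTop (nhds (f 1))) hfgc
      have := h'.add hc1
      rw [add_zero] at this
      simp only [← add_div] at this
      exact this
    have hu : Tendsto (fun k => (f ((M k - 1 : ℕ) : ℝ) + f 1) / f (g (c (M k - 1)) : ℝ))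
        atTop (nhds 0) := hbase.comp hφtop
    refine squeeze_zero' ?_ ?_ hu
    · filter_upwards with k
      exact div_nonneg (hf0 _ (Nat.cast_nonneg _)) (hf0 _ (Nat.cast_nonneg _))
    · filter_upwards [hMtop.eventually_ge_atTop 1,
        ((hgtop.comp hc.tendsto_atTop).comp hφtop).eventually_ge_atTop 1] with k hk1 hk2
      have hclt : c (M k - 1) < k := (hMlt k (M k - 1)).mpr (by omega)
      have hdpos : 0 < f (g (c (M k - 1)) : ℝ) := by
        apply hfpos
        exact_mod_cast Nat.lt_of_lt_of_le Nat.zero_lt_one hk2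
      have hdle : f (g (c (M k - 1)) : ℝ) ≤ f (g k : ℝ) := by
        apply hfmono (Set.mem_Ici.mpr (Nat.cast_nonneg _)) (Set.mem_Ici.mpr (Nat.cast_nonneg _))
        exact_mod_cast hgmono hclt.le
      have hnle : f ((M k : ℕ) : ℝ) ≤ f ((M k - 1 : ℕ) : ℝ) + f 1 := by
        have : ((M k : ℕ) : ℝ) = ((M k - 1 : ℕ) : ℝ) + 1 := by
          exact_mod_cast (Nat.sub_add_cancel hk1).symm
        rw [this]
        exact hfsub _ 1 (Nat.cast_nonneg _) zero_le_one
      rw [hcnt]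
      exact div_le_div₀ (add_nonneg (hf0 _ (Nat.cast_nonneg _)) (hf0 1 zero_le_one)) hnle hdpos hdle
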